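/- For every K > 2 and every K-NC-BN F on n nodes, if F is observable with an observation set of size m, then (m : ℝ) ≥ (1 − β_K) * n, where β_K = −( ((2^(K−1) − 1)/2^K) * Real.logb 2 ((2^(K−1) − 1)/2^K) + ((2^(K−1) + 1)/2^K) * Real.logb 2 ((2^(K−1) + 1)/2^K) ). -/

import Mathlib

/-- `F` is observable with observation set `S` if the map from an initial state to its
output sequence (the restriction of each iterate to `S`) is injective. -/
def observable {n : ℕ} (F : (Fin n → Bool) → (Fin n → Bool)) (S : Finset (Fin n)) : Prop :=
  Function.Injective (fun (x : Fin n → Bool) => fun (t : ℕ) (i : S) => (F^[t] x) i.val)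

/-- Nested canalyzing functions over the variable set `V`, generated inductively:
a literal is nested canalyzing, and `ℓ ∨ g`, `ℓ ∧ g` are nested canalyzing whenever
`ℓ` is a literal in a variable not used by the nested canalyzing function `g`. -/
inductive NestedCanalyzing {n : ℕ} : ((Fin n → Bool) → Bool) → Finset (Fin n) → Prop
  | lit (i : Fin n) (b : Bool) : NestedCanalyzing (fun x => Bool.xor (x i) b) {i}
  | or (i : Fin n) (b : Bool) {g : (Fin n → Bool) → Bool} {V : Finset (Fin n)}
      (hi : i ∉ V) (hg : NestedCanalyzing g V) :
      NestedCanalyzing (fun x => (Bool.xor (x i) b) || g x) (insert i V)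
  | and (i : Fin n) (b : Bool) {g : (Fin n → Bool) → Bool} {V : Finset (Fin n)}
      (hi : i ∉ V) (hg : NestedCanalyzing g V) :
      NestedCanalyzing (fun x => (Bool.xor (x i) b) && g x) (insert i V)

/-- `F` is a `K`-NC-BN: every coordinate function is nested canalyzing over some
`K` pairwise distinct variables. -/
def isNCBN {n : ℕ} (K : ℕ) (F : (Fin n → Bool) → (Fin n → Bool)) : Prop :=
  ∀ i : Fin n, ∃ V : Finset (Fin n), V.card = K ∧ NestedCanalyzing (fun x => F x i) V

open Finset Real

lemma nc_indep {n : ℕ} {g : (Fin n → Bool) → Bool} {V : Finset (Fin n)}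
    (h : NestedCanalyzing g V) :
    ∀ j ∉ V, ∀ (x : Fin n → Bool) (v : Bool), g (Function.update x j v) = g x := by
  induction h with
  | lit i b =>
      intro j hj x v
      have hji : j ≠ i := by simpa using hj
      simp [Function.update_apply, (Ne.symm hji)]
  | or i b hi hg ih =>
      intro j hj x v
      have hji : j ≠ i := fun e => hj (by simp [e])
      have hjV : j ∉ _ := fun hm => hj (Finset.mem_insert_of_mem hm)
      have h1 : Function.update x j v i = x i := by
        simp [Function.update_apply, (Ne.symm hji)]
      simp only [h1, ih j hjV x v]
  | and i b hi hg ih =>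
      intro j hj x v
      have hji : j ≠ i := fun e => hj (by simp [e])
      have hjV : j ∉ _ := fun hm => hj (Finset.mem_insert_of_mem hm)
      have h1 : Function.update x j v i = x i := by
        simp [Function.update_apply, (Ne.symm hji)]
      simp only [h1, ih j hjV x v]

lemma slice_card_eq {n : ℕ} {g : (Fin n → Bool) → Bool} (i : Fin n)
    (hind : ∀ (x : Fin n → Bool) (v : Bool), g (Function.update x i v) = g x)
    (c c' : Bool) :
    (Finset.univ.filter (fun x : Fin n → Bool => x i = c ∧ g x = true)).card =
    (Finset.univ.filter (fun x : Fin n → Bool => x i = c' ∧ g x = true)).card := by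
  apply Finset.card_nbij (fun x => Function.update x i c')
  · intro x hx
    simp only [Finset.coe_filter, Set.mem_setOf_eq, Finset.mem_filter, Finset.mem_coe, Finset.mem_univ, true_and] at hx ⊢
    exact ⟨Function.update_self i c' x, by rw [hind]; exact hx.2⟩
  · intro x hx y hy hxy
    simp only [Finset.coe_filter, Set.mem_setOf_eq, Finset.mem_univ, true_and] at hx hy
    funext j
    by_cases hj : j = i
    · rw [hj, hx.1, hy.1]
    · have := congrFun hxy j
      simpa [Function.update_apply, hj] using this
  · intro y hy
    simp only [Finset.coe_filter, Set.mem_setOf_eq, Finset.mem_univ, true_and] at hy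
    refine ⟨Function.update y i c, ?_, ?_⟩
    · simp only [Finset.coe_filter, Set.mem_setOf_eq, Finset.mem_univ, true_and]
      exact ⟨Function.update_self i c y, by rw [hind]; exact hy.2⟩
    · funext j
      by_cases hj : j = i
      · rw [hj]; simp [Function.update_self, hy.1]
      · simp [Function.update_apply, hj]

lemma slice_card_two {n : ℕ} {g : (Fin n → Bool) → Bool} (i : Fin n)
    (hind : ∀ (x : Fin n → Bool) (v : Bool), g (Function.update x i v) = g x)
    (c : Bool) :
    (Finset.univ.filter (fun x : Fin n → Bool => x i = c ∧ g x = true)).card * 2 =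
    (Finset.univ.filter (fun x : Fin n → Bool => g x = true)).card := by
  classical
  have hsplit : (Finset.univ.filter (fun x : Fin n → Bool => g x = true)).card =
      ∑ b : Bool, (Finset.univ.filter (fun x : Fin n → Bool => x i = b ∧ g x = true)).card := by
    have := Finset.sum_card_fiberwise_eq_card_filter
      (Finset.univ.filter (fun x : Fin n → Bool => g x = true)) Finset.univ (fun x => x i)
    simp only [Finset.filter_filter] at this
    calc (Finset.univ.filter (fun x : Fin n → Bool => g x = true)).card
        = (Finset.univ.filter
            (fun a : Fin n → Bool => g a = true ∧ a i ∈ Finset.univ)).card := by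
          congr 1; ext x; simp [Finset.mem_univ]
      _ = ∑ b : Bool, (Finset.univ.filter
            (fun a : Fin n → Bool => g a = true ∧ a i = b)).card := this.symm
      _ = ∑ b : Bool, (Finset.univ.filter
            (fun x : Fin n → Bool => x i = b ∧ g x = true)).card := by
          apply Finset.sum_congr rfl
          intro b _
          congr 1
          ext x
          simp [and_comm]
  rw [hsplit, Fintype.sum_bool]
  rcases c with _ | _
  · rw [slice_card_eq i hind false true]; ring
  · rw [slice_card_eq i hind true false]; ring

lemma card_slice_const {n : ℕ} (i : Fin n) (c : Bool) :
    (Finset.univ.filter (fun x : Fin n → Bool => x i = c)).card * 2 = 2 ^ n := by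
  classical
  have h := slice_card_two (g := fun _ : Fin n → Bool => true) i (by intro x v; rfl) c
  simp only [and_true] at h
  simp only [Finset.filter_true] at h
  rw [h, Finset.card_univ, Fintype.card_fun, Fintype.card_bool, Fintype.card_fin]

lemma arith1 (n k : ℕ) (h : k + 1 ≤ n) : 2 ^ (n - (k + 1)) * 2 = 2 ^ (n - k) := by
  rw [← pow_succ]; congr 1; omega

lemma arith2 (n k : ℕ) (h : k ≤ n) : (2 : ℕ) ^ k * 2 ^ (n - k) = 2 ^ n := by
  rw [← pow_add]; congr 1; omega

lemma arith3 (k a : ℕ) (h : a < 2 ^ k) : 2 ^ k + a < 2 ^ (k + 1) := by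
  rw [pow_succ]; omega

lemma arith4 (k a : ℕ) (h : a < 2 ^ k) : a < 2 ^ (k + 1) := by
  have := arith3 k a h; omega

lemma arith5 (k : ℕ) (h : 0 < k) : k ≠ 0 := by omega

lemma nc_count {n : ℕ} {g : (Fin n → Bool) → Bool} {V : Finset (Fin n)}
    (h : NestedCanalyzing g V) :
    ∃ a : ℕ, Odd a ∧ a < 2 ^ V.card ∧ 0 < V.card ∧
      (Finset.univ.filter (fun x => g x = true)).card = a * 2 ^ (n - V.card) := by
  classical
  induction h with
  | lit i b =>
      refine ⟨1, odd_one, ?_, ?_, ?_⟩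
      · simp
      · simp
      have hn : 1 ≤ n := by
        rcases Nat.eq_zero_or_pos n with h0 | h0
        · subst h0; exact absurd i.2 (by omega)
        · exact h0
      have key : (Finset.univ.filter (fun x : Fin n → Bool => Bool.xor (x i) b = true)).card
          = (Finset.univ.filter (fun x : Fin n → Bool => x i = !b)).card := by
        congr 1; ext x; cases b <;> cases hx : x i <;> simp [hx]
      rw [key]
      simp only [Finset.card_singleton]
      have h2 := card_slice_const i (!b)
      have hpow : 2 ^ n = 2 ^ (n - 1) * 2 := by
        rw [← pow_succ, Nat.sub_add_cancel hn]
      rw [one_mul]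
      apply Nat.eq_of_mul_eq_mul_right (show 0 < 2 by norm_num)
      rw [h2, hpow]
  | or i b hi hg ih =>
      obtain ⟨a, ha_odd, ha_lt, hV_pos, ha_card⟩ := ih
      rename_i g' V'
      have hcard : (insert i V').card = V'.card + 1 := Finset.card_insert_of_notMem hi
      have hkn : V'.card + 1 ≤ n := by
        have := Finset.card_le_univ (insert i V')
        rwa [hcard, Fintype.card_fin] at this
      set k := V'.card with hk
      have hind := fun x v => nc_indep hg i hi x v
      have count2 := slice_card_two i hind b
      rw [ha_card] at count2
      have count1 := card_slice_const i (!b)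
      have split : (Finset.univ.filter
            (fun x : Fin n → Bool => (Bool.xor (x i) b || g' x) = true)).card =
          (Finset.univ.filter (fun x : Fin n → Bool => x i = !b)).card +
          (Finset.univ.filter (fun x : Fin n → Bool => x i = b ∧ g' x = true)).card := by
        have hiff : ∀ x : Fin n → Bool,
            ((Bool.xor (x i) b || g' x) = true) ↔ ((x i = !b) ∨ (x i = b ∧ g' x = true)) := by
          intro x; cases b <;> cases hx : x i <;> simp [hx]
        have : (Finset.univ.filter
              (fun x : Fin n → Bool => (Bool.xor (x i) b || g' x) = true)) =
            (Finset.univ.filter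
              (fun x : Fin n → Bool => (x i = !b) ∨ (x i = b ∧ g' x = true))) := by
          ext x
          simp only [Finset.mem_filter, Finset.mem_univ, true_and]
          exact hiff x
        rw [this, Finset.filter_or, Finset.card_union_of_disjoint]
        rw [Finset.disjoint_left]
        intro x h1 h2
        simp only [Finset.mem_filter, Finset.mem_univ, true_and] at h1 h2
        rw [h1] at h2
        cases b <;> simp at h2
      refine ⟨2 ^ k + a, ?_, ?_, ?_, ?_⟩
      · exact (Nat.even_pow.mpr ⟨even_two, arith5 k hV_pos⟩).add_odd ha_odd
      · rw [hcard]
        exact arith3 k a ha_lt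
      · rw [hcard]; exact Nat.succ_pos k
      · rw [hcard, split]
        apply Nat.eq_of_mul_eq_mul_right (show 0 < 2 by norm_num)
        have e1 := arith1 n k hkn
        have e2 := arith2 n k (by exact le_trans (Nat.le_succ k) hkn)
        calc ((Finset.univ.filter (fun x : Fin n → Bool => x i = !b)).card +
              (Finset.univ.filter (fun x : Fin n → Bool => x i = b ∧ g' x = true)).card) * 2
            = (Finset.univ.filter (fun x : Fin n → Bool => x i = !b)).card * 2 +
              (Finset.univ.filter (fun x : Fin n → Bool => x i = b ∧ g' x = true)).card * 2 := by
              ring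
          _ = 2 ^ n + a * 2 ^ (n - k) := by rw [count1, count2]
          _ = (2 ^ k + a) * 2 ^ (n - (k + 1)) * 2 := by
              rw [mul_assoc, e1, add_mul, e2]
  | and i b hi hg ih =>
      obtain ⟨a, ha_odd, ha_lt, hV_pos, ha_card⟩ := ih
      rename_i g' V'
      have hcard : (insert i V').card = V'.card + 1 := Finset.card_insert_of_notMem hi
      have hkn : V'.card + 1 ≤ n := by
        have := Finset.card_le_univ (insert i V')
        rwa [hcard, Fintype.card_fin] at this
      set k := V'.card with hk
      have hind := fun x v => nc_indep hg i hi x v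
      have count2 := slice_card_two i hind (!b)
      rw [ha_card] at count2
      have split : (Finset.univ.filter
            (fun x : Fin n → Bool => (Bool.xor (x i) b && g' x) = true)).card =
          (Finset.univ.filter (fun x : Fin n → Bool => x i = !b ∧ g' x = true)).card := by
        congr 1
        ext x
        cases b <;> cases hx : x i <;> simp [hx]
      refine ⟨a, ha_odd, ?_, ?_, ?_⟩
      · rw [hcard]
        exact arith4 k a ha_lt
      · rw [hcard]; exact Nat.succ_pos k
      · rw [hcard, split]
        apply Nat.eq_of_mul_eq_mul_right (show 0 < 2 by norm_num)
        have e1 := arith1 n k hkn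
        rw [count2, mul_assoc, e1]

lemma entropy_chain {n : ℕ} (F : (Fin n → Bool) → (Fin n → Bool)) :
    (∑ y : Fin n → Bool,
      Real.negMulLog ((#(Finset.univ.filter fun x => F x = y) : ℝ) / 2 ^ n))
    ≤ ∑ i : Fin n, ∑ b : Bool,
        Real.negMulLog ((#(Finset.univ.filter fun x => F x i = b) : ℝ) / 2 ^ n) := by
  classical
  set Nr : ℝ := (2 : ℝ) ^ n with hNr_def
  have hNr : 0 < Nr := by positivity
  set c : (Fin n → Bool) → ℕ := fun y => #(Finset.univ.filter fun x => F x = y) with hc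
  set a : Fin n → Bool → ℕ := fun i b => #(Finset.univ.filter fun x => F x i = b) with ha
  set p : (Fin n → Bool) → ℝ := fun y => (c y : ℝ) / Nr with hp
  set r : Fin n → Bool → ℝ := fun i b => (a i b : ℝ) / Nr with hr
  set q : (Fin n → Bool) → ℝ := fun y => ∏ i, r i (y i) with hq
  -- basic facts
  have hsum_c : ∑ y : Fin n → Bool, c y = 2 ^ n := by
    have h := Finset.sum_card_fiberwise_eq_card_filter
      (Finset.univ : Finset (Fin n → Bool)) (Finset.univ : Finset (Fin n → Bool)) F
    simp only [Finset.mem_univ, Finset.filter_true] at h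
    rw [hc]
    simp only [h]
    rw [Finset.card_univ, Fintype.card_fun, Fintype.card_bool, Fintype.card_fin]
  have hsum_p : ∑ y : Fin n → Bool, p y = 1 := by
    rw [hp]
    simp only
    rw [← Finset.sum_div]
    rw [← Nat.cast_sum, hsum_c, hNr_def]
    push_cast
    field_simp
  have hsum_ab : ∀ i : Fin n, (a i true : ℝ) + a i false = Nr := by
    intro i
    have h := Finset.sum_card_fiberwise_eq_card_filter
      (Finset.univ : Finset (Fin n → Bool)) (Finset.univ : Finset Bool) (fun x => F x i)
    simp only [Finset.mem_univ, Finset.filter_true] at h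
    rw [Fintype.sum_bool] at h
    rw [Finset.card_univ, Fintype.card_fun, Fintype.card_bool, Fintype.card_fin] at h
    have h2 : a i true + a i false = 2 ^ n := by rw [ha]; exact h
    have h3 : ((a i true + a i false : ℕ) : ℝ) = ((2 ^ n : ℕ) : ℝ) := by rw [h2]
    push_cast at h3
    rw [hNr_def]
    push_cast
    linarith [h3]
  have hsum_r : ∀ i : Fin n, ∑ b : Bool, r i b = 1 := by
    intro i
    rw [Fintype.sum_bool, hr]
    simp only
    rw [← add_div, hsum_ab i]
    field_simp
  have hmarg : ∀ (i : Fin n) (b : Bool),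
      ∑ y ∈ Finset.univ.filter (fun y : Fin n → Bool => y i = b), p y = r i b := by
    intro i b
    have h := Finset.sum_fiberwise_eq_sum_filter
      (Finset.univ : Finset (Fin n → Bool))
      (Finset.univ.filter (fun y : Fin n → Bool => y i = b)) F (fun _ => (1 : ℕ))
    have h1 : ∑ y ∈ Finset.univ.filter (fun y : Fin n → Bool => y i = b), c y = a i b := by
      rw [hc, ha]
      simp only
      calc ∑ y ∈ Finset.univ.filter (fun y : Fin n → Bool => y i = b),
            #(Finset.univ.filter fun x => F x = y)
          = ∑ y ∈ Finset.univ.filter (fun y : Fin n → Bool => y i = b),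
            ∑ x ∈ Finset.univ.filter (fun x => F x = y), (1 : ℕ) := by
            apply Finset.sum_congr rfl; intro y _; rw [Finset.card_eq_sum_ones]
        _ = ∑ x ∈ Finset.univ.filter
              (fun x => F x ∈ Finset.univ.filter (fun y : Fin n → Bool => y i = b)), (1 : ℕ) := h
        _ = #(Finset.univ.filter fun x => F x i = b) := by
            rw [← Finset.card_eq_sum_ones]
            congr 1
            ext x
            simp
    rw [hp, hr]
    simp only
    rw [← Finset.sum_div, ← Nat.cast_sum, h1]
  have hle_ca : ∀ (y : Fin n → Bool) (i : Fin n), c y ≤ a i (y i) := by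
    intro y i
    apply Finset.card_le_card
    intro x hx
    simp only [Finset.mem_filter, Finset.mem_univ, true_and] at hx ⊢
    rw [hx]
  have hq_sum : ∑ y : Fin n → Bool, q y = 1 := by
    rw [hq]
    simp only
    have h := Finset.prod_univ_sum (fun _ : Fin n => (Finset.univ : Finset Bool))
      (fun i b => r i b)
    rw [Fintype.piFinset_univ] at h
    rw [← h]
    rw [Finset.prod_congr rfl (fun i _ => hsum_r i), Finset.prod_const_one]
  have hp_nonneg : ∀ y, 0 ≤ p y := fun y => by positivity
  have hq_nonneg : ∀ y, 0 ≤ q y := fun y => Finset.prod_nonneg (fun i _ => by positivity)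
  -- Gibbs inequality
  have gibbs : ∑ y : Fin n → Bool, Real.negMulLog (p y) ≤
      ∑ y : Fin n → Bool, (-(p y * Real.log (q y)) + (q y - p y)) := by
    apply Finset.sum_le_sum
    intro y _
    by_cases hcy : c y = 0
    · have hpy : p y = 0 := by rw [hp]; simp [hcy]
      rw [hpy]
      simp [Real.negMulLog_zero]
      linarith [hq_nonneg y]
    · have hpy : 0 < p y := by
        rw [hp]; simp only
        apply div_pos _ hNr
        exact_mod_cast Nat.pos_of_ne_zero hcy
      have hqy : 0 < q y := by
        apply Finset.prod_pos
        intro i _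
        rw [hr]; simp only
        apply div_pos _ hNr
        have := hle_ca y i
        have : 0 < a i (y i) := lt_of_lt_of_le (Nat.pos_of_ne_zero hcy) this
        exact_mod_cast this
      rw [Real.negMulLog]
      have hlog : Real.log (q y / p y) ≤ q y / p y - 1 :=
        Real.log_le_sub_one_of_pos (div_pos hqy hpy)
      rw [Real.log_div hqy.ne' hpy.ne'] at hlog
      have := mul_le_mul_of_nonneg_left hlog hpy.le
      have hexp : p y * (q y / p y - 1) = q y - p y := by field_simp
      rw [hexp] at this
      nlinarith
  have gibbs2 : ∑ y : Fin n → Bool, (-(p y * Real.log (q y)) + (q y - p y)) =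
      ∑ y : Fin n → Bool, -(p y * Real.log (q y)) := by
    rw [Finset.sum_add_distrib, Finset.sum_sub_distrib, hq_sum, hsum_p]
    ring
  -- expand log of product
  have hlogq : ∀ y : Fin n → Bool,
      p y * Real.log (q y) = ∑ i : Fin n, p y * Real.log (r i (y i)) := by
    intro y
    by_cases hcy : c y = 0
    · have hpy : p y = 0 := by rw [hp]; simp [hcy]
      simp [hpy]
    · have hr_ne : ∀ i ∈ (Finset.univ : Finset (Fin n)), r i (y i) ≠ 0 := by
        intro i _
        rw [hr]; simp only
        have : 0 < a i (y i) := lt_of_lt_of_le (Nat.pos_of_ne_zero hcy) (hle_ca y i)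
        positivity
      rw [hq]
      simp only
      rw [Real.log_prod hr_ne, Finset.mul_sum]
  have swap : ∑ y : Fin n → Bool, -(p y * Real.log (q y)) =
      ∑ i : Fin n, ∑ b : Bool, Real.negMulLog (r i b) := by
    calc ∑ y : Fin n → Bool, -(p y * Real.log (q y))
        = ∑ y : Fin n → Bool, ∑ i : Fin n, -(p y * Real.log (r i (y i))) := by
          apply Finset.sum_congr rfl
          intro y _
          rw [hlogq y, ← Finset.sum_neg_distrib]
      _ = ∑ i : Fin n, ∑ y : Fin n → Bool, -(p y * Real.log (r i (y i))) := Finset.sum_comm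
      _ = ∑ i : Fin n, ∑ b : Bool, Real.negMulLog (r i b) := by
          apply Finset.sum_congr rfl
          intro i _
          have hfib := Finset.sum_fiberwise (Finset.univ : Finset (Fin n → Bool))
            (fun y => y i) (fun y => -(p y * Real.log (r i (y i))))
          rw [← hfib]
          apply Finset.sum_congr rfl
          intro b _
          calc ∑ y ∈ Finset.univ.filter (fun y : Fin n → Bool => y i = b),
                -(p y * Real.log (r i (y i)))
              = ∑ y ∈ Finset.univ.filter (fun y : Fin n → Bool => y i = b),
                p y * -(Real.log (r i b)) := by
                apply Finset.sum_congr rfl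
                intro y hy
                have : y i = b := (Finset.mem_filter.1 hy).2
                rw [this]; ring
            _ = (∑ y ∈ Finset.univ.filter (fun y : Fin n → Bool => y i = b), p y) *
                -(Real.log (r i b)) := by rw [← Finset.sum_mul]
            _ = Real.negMulLog (r i b) := by
                rw [hmarg i b, Real.negMulLog]; ring
  calc ∑ y : Fin n → Bool, Real.negMulLog (p y)
      ≤ ∑ y : Fin n → Bool, (-(p y * Real.log (q y)) + (q y - p y)) := gibbs
    _ = ∑ y : Fin n → Bool, -(p y * Real.log (q y)) := gibbs2
    _ = ∑ i : Fin n, ∑ b : Bool, Real.negMulLog (r i b) := swap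

lemma entropy_lower {n m : ℕ} (F : (Fin n → Bool) → (Fin n → Bool))
    (hle : ∀ y : Fin n → Bool, #(Finset.univ.filter fun x => F x = y) ≤ 2 ^ m) :
    ((n : ℝ) - m) * Real.log 2 ≤
      ∑ y : Fin n → Bool,
        Real.negMulLog ((#(Finset.univ.filter fun x => F x = y) : ℝ) / 2 ^ n) := by
  classical
  set Nr : ℝ := (2 : ℝ) ^ n with hNr_def
  have hNr : 0 < Nr := by positivity
  set c : (Fin n → Bool) → ℕ := fun y => #(Finset.univ.filter fun x => F x = y) with hc
  have hsum_c : ∑ y : Fin n → Bool, c y = 2 ^ n := by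
    have h := Finset.sum_card_fiberwise_eq_card_filter
      (Finset.univ : Finset (Fin n → Bool)) (Finset.univ : Finset (Fin n → Bool)) F
    simp only [Finset.mem_univ, Finset.filter_true] at h
    rw [hc]
    simp only [h]
    rw [Finset.card_univ, Fintype.card_fun, Fintype.card_bool, Fintype.card_fin]
  have hsum_p : ∑ y : Fin n → Bool, (c y : ℝ) / Nr = 1 := by
    rw [← Finset.sum_div, ← Nat.cast_sum, hsum_c, hNr_def]
    push_cast
    field_simp
  have key : ∀ y : Fin n → Bool,
      ((c y : ℝ) / Nr) * (((n : ℝ) - m) * Real.log 2) ≤ Real.negMulLog ((c y : ℝ) / Nr) := by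
    intro y
    by_cases hcy : c y = 0
    · simp [hcy]
    · have hcpos : (0 : ℝ) < c y := by exact_mod_cast Nat.pos_of_ne_zero hcy
      have hppos : 0 < (c y : ℝ) / Nr := div_pos hcpos hNr
      rw [Real.negMulLog, neg_mul]
      rw [Real.log_div hcpos.ne' hNr.ne']
      have hlogc : Real.log (c y) ≤ m * Real.log 2 := by
        calc Real.log (c y) ≤ Real.log ((2 : ℝ) ^ m) := by
              apply Real.log_le_log hcpos
              exact_mod_cast hle y
          _ = m * Real.log 2 := by rw [Real.log_pow]
      have hlogN : Real.log Nr = n * Real.log 2 := by rw [hNr_def, Real.log_pow]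
      have : Real.log (c y) - Real.log Nr ≤ -(((n : ℝ) - m) * Real.log 2) := by
        rw [hlogN]; linarith
      calc ((c y : ℝ) / Nr) * (((n : ℝ) - m) * Real.log 2)
          = ((c y : ℝ) / Nr) * -(Real.log (c y) - Real.log Nr) -
            ((c y : ℝ) / Nr) * (-(Real.log (c y) - Real.log Nr) -
              ((n : ℝ) - m) * Real.log 2) := by ring
        _ ≤ ((c y : ℝ) / Nr) * -(Real.log (c y) - Real.log Nr) := by
            have h2 : 0 ≤ ((c y : ℝ) / Nr) * (-(Real.log (c y) - Real.log Nr) -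
                ((n : ℝ) - m) * Real.log 2) := by
              apply mul_nonneg hppos.le
              linarith
            linarith
        _ = -((c y : ℝ) / Nr * (Real.log (c y) - Real.log Nr)) := by ring
  calc ((n : ℝ) - m) * Real.log 2
      = (∑ y : Fin n → Bool, (c y : ℝ) / Nr) * (((n : ℝ) - m) * Real.log 2) := by
        rw [hsum_p, one_mul]
    _ = ∑ y : Fin n → Bool, ((c y : ℝ) / Nr) * (((n : ℝ) - m) * Real.log 2) := by
        rw [Finset.sum_mul]
    _ ≤ ∑ y : Fin n → Bool, Real.negMulLog ((c y : ℝ) / Nr) :=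
        Finset.sum_le_sum (fun y _ => key y)

lemma fiber_card_le {n m : ℕ} {F : (Fin n → Bool) → (Fin n → Bool)} {S : Finset (Fin n)}
    (hS : S.card = m) (hobs : observable F S) (y : Fin n → Bool) :
    #(Finset.univ.filter fun x => F x = y) ≤ 2 ^ m := by
  classical
  have hinj : Set.InjOn (fun (x : Fin n → Bool) (i : {i // i ∈ S}) => x i.val)
      (Finset.univ.filter fun x => F x = y : Finset (Fin n → Bool)) := by
    intro x hx x' hx' h
    simp only [Finset.coe_filter, Set.mem_setOf_eq, Finset.mem_univ, true_and] at hx hx'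
    apply hobs
    funext t i
    cases t with
    | zero =>
        simp only [Function.iterate_zero, id_eq]
        exact congrFun h i
    | succ t =>
        simp only [Function.iterate_succ_apply]
        rw [show F x = F x' by rw [hx, hx']]
  have hcard := Finset.card_le_card_of_injOn
    (fun (x : Fin n → Bool) (i : {i // i ∈ S}) => x i.val)
    (fun x _ => Finset.mem_univ _) hinj
  calc #(Finset.univ.filter fun x => F x = y)
      ≤ #(Finset.univ : Finset ({i // i ∈ S} → Bool)) := hcard
    _ = 2 ^ m := by
        rw [Finset.card_univ, Fintype.card_fun, Fintype.card_bool, Fintype.card_coe, hS]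

lemma nc_binEntropy {n K : ℕ} (hK : 2 < K) {g : (Fin n → Bool) → Bool} {V : Finset (Fin n)}
    (hNC : NestedCanalyzing g V) (hV : V.card = K) :
    Real.binEntropy ((#(Finset.univ.filter fun x => g x = true) : ℝ) / 2 ^ n)
      ≤ Real.binEntropy (((2 : ℝ) ^ (K - 1) - 1) / 2 ^ K) := by
  classical
  obtain ⟨A, hodd, hlt, hpos, hcount⟩ := nc_count hNC
  rw [hV] at hlt hcount
  have hKn : K ≤ n := by
    rw [← hV]
    have := Finset.card_le_univ V
    simpa [Fintype.card_fin] using this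
  have hNsplit : (2 : ℝ) ^ n = 2 ^ K * 2 ^ (n - K) := by rw [← pow_add]; congr 1; omega
  have hpowK_ne : ((2 : ℝ) ^ (n - K)) ≠ 0 := by positivity
  have hrho : (#(Finset.univ.filter fun x => g x = true) : ℝ) / 2 ^ n = (A : ℝ) / 2 ^ K := by
    rw [hcount]
    push_cast
    rw [hNsplit, mul_div_mul_right _ _ hpowK_ne]
  rw [hrho]
  have hK1 : (2 : ℝ) ^ (K - 1) * 2 = 2 ^ K := by rw [← pow_succ]; congr 1; omega
  have h2K : (0 : ℝ) < 2 ^ K := by positivity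
  have h2K1 : (1 : ℝ) ≤ 2 ^ (K - 1) := one_le_pow₀ (by norm_num)
  have hp0_nonneg : (0 : ℝ) ≤ ((2 : ℝ) ^ (K - 1) - 1) / 2 ^ K := by
    apply div_nonneg _ h2K.le; linarith
  have hp0_le : ((2 : ℝ) ^ (K - 1) - 1) / 2 ^ K ≤ 2⁻¹ := by
    rw [div_le_iff₀ h2K]
    nlinarith [hK1]
  have hA_ne : A ≠ 2 ^ (K - 1) := by
    intro h
    have heven : Even (2 ^ (K - 1) : ℕ) := Nat.even_pow.mpr ⟨even_two, by omega⟩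
    rw [h] at hodd
    exact (Nat.not_odd_iff_even.mpr heven) hodd
  have hmono := Real.binEntropy_strictMonoOn.monotoneOn
  rcases lt_or_gt_of_ne hA_ne with hcase | hcase
  · have hA_le : (A : ℝ) ≤ 2 ^ (K - 1) - 1 := by
      have h1 : A ≤ 2 ^ (K - 1) - 1 := by omega
      have h2 : (1 : ℕ) ≤ 2 ^ (K - 1) := Nat.one_le_two_pow
      have h3 : ((2 ^ (K - 1) - 1 : ℕ) : ℝ) = (2 : ℝ) ^ (K - 1) - 1 := by
        rw [Nat.cast_sub h2]
        push_cast
        ring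
      calc (A : ℝ) ≤ ((2 ^ (K - 1) - 1 : ℕ) : ℝ) := by exact_mod_cast h1
        _ = (2 : ℝ) ^ (K - 1) - 1 := h3
    have hrle : (A : ℝ) / 2 ^ K ≤ ((2 : ℝ) ^ (K - 1) - 1) / 2 ^ K :=
      div_le_div_of_nonneg_right hA_le h2K.le
    exact hmono ⟨by positivity, le_trans hrle hp0_le⟩ ⟨hp0_nonneg, hp0_le⟩ hrle
  · have h1A : (2 : ℝ) ^ (K - 1) + 1 ≤ (A : ℝ) := by
      have h1 : 2 ^ (K - 1) + 1 ≤ A := by omega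
      have : ((2 ^ (K - 1) + 1 : ℕ) : ℝ) ≤ (A : ℝ) := by exact_mod_cast h1
      push_cast at this
      linarith
    have hA2K : (A : ℝ) ≤ 2 ^ K := by
      have h1 : A ≤ 2 ^ K := le_of_lt hlt
      have : ((A : ℕ) : ℝ) ≤ ((2 ^ K : ℕ) : ℝ) := by exact_mod_cast h1
      push_cast at this
      linarith
    rw [show (A : ℝ) / 2 ^ K = 1 - (1 - (A : ℝ) / 2 ^ K) by ring, Real.binEntropy_one_sub]
    have heq : (1 : ℝ) - (A : ℝ) / 2 ^ K = ((2 : ℝ) ^ K - A) / 2 ^ K := by field_simp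
    have hle2 : (1 : ℝ) - (A : ℝ) / 2 ^ K ≤ ((2 : ℝ) ^ (K - 1) - 1) / 2 ^ K := by
      rw [heq]
      apply div_le_div_of_nonneg_right _ h2K.le
      linarith [hK1]
    have hge0 : (0 : ℝ) ≤ 1 - (A : ℝ) / 2 ^ K := by
      have : (A : ℝ) / 2 ^ K ≤ 1 := by rw [div_le_one h2K]; exact hA2K
      linarith
    exact hmono ⟨hge0, le_trans hle2 hp0_le⟩ ⟨hp0_nonneg, hp0_le⟩ hle2

theorem K_nc_lower_bound (n K m : ℕ) (hK : 2 < K)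
    (F : (Fin n → Bool) → (Fin n → Bool)) (hF : isNCBN K F)
    (S : Finset (Fin n)) (hS : S.card = m) (hobs : observable F S) :
    (m : ℝ) ≥
      (1 - (-((((2 : ℝ) ^ (K - 1) - 1) / (2 : ℝ) ^ K) *
              Real.logb 2 (((2 : ℝ) ^ (K - 1) - 1) / (2 : ℝ) ^ K) +
            (((2 : ℝ) ^ (K - 1) + 1) / (2 : ℝ) ^ K) *
              Real.logb 2 (((2 : ℝ) ^ (K - 1) + 1) / (2 : ℝ) ^ K)))) * n := by
  classical
  set p0 : ℝ := ((2 : ℝ) ^ (K - 1) - 1) / (2 : ℝ) ^ K with hp0_def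
  set p1 : ℝ := ((2 : ℝ) ^ (K - 1) + 1) / (2 : ℝ) ^ K with hp1_def
  have hK1 : (2 : ℝ) ^ (K - 1) * 2 = 2 ^ K := by rw [← pow_succ]; congr 1; omega
  have h2K : (0 : ℝ) < 2 ^ K := by positivity
  have hp1eq : p1 = 1 - p0 := by
    rw [hp0_def, hp1_def]
    field_simp
    linarith [hK1]
  -- entropy chain
  have h1 := entropy_lower F (fun y => fiber_card_le hS hobs y)
  have h2 := entropy_chain F
  have h3 : ∀ i : Fin n, (∑ b : Bool,
      Real.negMulLog ((#(Finset.univ.filter fun x => F x i = b) : ℝ) / 2 ^ n))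
      ≤ Real.binEntropy p0 := by
    intro i
    obtain ⟨V, hV, hNC⟩ := hF i
    have hab : (#(Finset.univ.filter fun x => F x i = true) : ℝ) / 2 ^ n +
        (#(Finset.univ.filter fun x => F x i = false) : ℝ) / 2 ^ n = 1 := by
      have h := Finset.sum_card_fiberwise_eq_card_filter
        (Finset.univ : Finset (Fin n → Bool)) (Finset.univ : Finset Bool) (fun x => F x i)
      simp only [Finset.mem_univ, Finset.filter_true] at h
      rw [Fintype.sum_bool] at h
      rw [Finset.card_univ, Fintype.card_fun, Fintype.card_bool, Fintype.card_fin] at h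
      rw [← add_div, div_eq_one_iff_eq (by positivity)]
      exact_mod_cast h
    rw [Fintype.sum_bool]
    have hfalse : (#(Finset.univ.filter fun x => F x i = false) : ℝ) / 2 ^ n =
        1 - (#(Finset.univ.filter fun x => F x i = true) : ℝ) / 2 ^ n := by linarith
    rw [hfalse, ← Real.binEntropy_eq_negMulLog_add_negMulLog_one_sub]
    exact nc_binEntropy hK hNC hV
  have h4 : (∑ i : Fin n, ∑ b : Bool,
      Real.negMulLog ((#(Finset.univ.filter fun x => F x i = b) : ℝ) / 2 ^ n))
      ≤ (n : ℝ) * Real.binEntropy p0 := by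
    calc (∑ i : Fin n, ∑ b : Bool,
        Real.negMulLog ((#(Finset.univ.filter fun x => F x i = b) : ℝ) / 2 ^ n))
        ≤ ∑ _i : Fin n, Real.binEntropy p0 := Finset.sum_le_sum (fun i _ => h3 i)
      _ = (n : ℝ) * Real.binEntropy p0 := by
          rw [Finset.sum_const, Finset.card_univ, Fintype.card_fin, nsmul_eq_mul]
  have hchain : ((n : ℝ) - m) * Real.log 2 ≤ (n : ℝ) * Real.binEntropy p0 :=
    le_trans h1 (le_trans h2 h4)
  have hL : (0 : ℝ) < Real.log 2 := Real.log_pos one_lt_two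
  have hbeta : -(p0 * Real.logb 2 p0 + p1 * Real.logb 2 p1) =
      Real.binEntropy p0 / Real.log 2 := by
    rw [Real.binEntropy_eq_negMulLog_add_negMulLog_one_sub, ← hp1eq]
    simp only [Real.logb, Real.negMulLog]
    field_simp
    ring
  rw [ge_iff_le, hbeta]
  have hdiv : (n : ℝ) - m ≤ (n : ℝ) * Real.binEntropy p0 / Real.log 2 := by
    rw [le_div_iff₀ hL]
    exact hchain
  have : (1 - Real.binEntropy p0 / Real.log 2) * n =
      (n : ℝ) - (n : ℝ) * Real.binEntropy p0 / Real.log 2 := by ring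
  rw [this]
  linarith
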